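/- Let I ⊆ A be the ideal generated by A^{-θ}, and let 𝐀₀ := 𝐀/(t) be the fiber of the contraction algebra at t = 0. Then there is a natural k-algebra isomorphism 𝐀₀ ≅ ⊕_{n≥0} I^n/I^{n+1}, the associated graded algebra of A with respect to I. -/

import Mathlib

open LaurentPolynomial

/-- The contraction algebra `𝐀`: the `k[t]`-subalgebra of `A[√t^{±1}]`
(with `t = (√t)²`) generated by `A^θ` and `(1/√t)·A^{-θ}`. -/
noncomputable def contraction (k A : Type*) [CommRing k] [CommRing A] [Algebra k A]
    (θ : A →ₐ[k] A) : Subalgebra k (LaurentPolynomial A) :=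
  Algebra.adjoin k (insert (T 2)
    ({f | ∃ a, θ a = a ∧ f = C a} ∪ {f | ∃ a, θ a = -a ∧ f = C a * T (-1)}))

theorem t_mem_contraction {k A : Type*} [CommRing k] [CommRing A] [Algebra k A]
    (θ : A →ₐ[k] A) : (T 2 : LaurentPolynomial A) ∈ contraction k A θ :=
  Algebra.subset_adjoin (Set.mem_insert _ _)

/-!
STATEMENT 14: let `I ⊆ A` be the ideal generated by `A^{-θ}` and
`𝐀₀ := 𝐀/(t)` the fiber of the contraction algebra at `t = 0`.  Then there is
a natural `k`-algebra isomorphism `𝐀₀ ≅ ⊕_{n≥0} Iⁿ/Iⁿ⁺¹`, where the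
associated graded algebra is realized as the quotient of the Rees algebra
`⊕ₙ Iⁿ Xⁿ ⊆ A[X]` by the ideal generated by `I` placed in degree `0`
(indeed `reesAlgebra I / I·(reesAlgebra I) = ⊕ₙ Iⁿ/Iⁿ⁺¹`). -/

set_option synthInstance.maxHeartbeats 1000000
set_option maxHeartbeats 4000000

set_option linter.unusedSectionVars false

section Aux
variable {k A : Type*} [CommRing k] [CommRing A] [Algebra k A] [Invertible (2 : k)]
variable (θ : A →ₐ[k] A)

/-- projection onto the `(-1)^n`-eigenspace of `θ`. -/
noncomputable def csigma (n : ℕ) (a : A) : A := (⅟(2:k)) • (a + (-1:A)^n * θ a)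

lemma half_cancel (x : A) : (⅟(2:k)) • (x + x) = x := by
  rw [← two_smul k x, smul_smul, invOf_mul_self, one_smul]

lemma csigma_add (n : ℕ) (a b : A) :
    csigma θ n (a + b) = csigma θ n a + csigma θ n b := by
  simp only [csigma, map_add, ← smul_add]
  congr 1
  ring

lemma csigma_zero (n : ℕ) : csigma θ n 0 = 0 := by simp [csigma]

lemma csigma_add_two (n : ℕ) (a : A) : csigma θ (n + 2) a = csigma θ n a := by
  simp only [csigma, pow_add]
  norm_num

lemma csigma_sum_succ (n : ℕ) (a : A) : csigma θ n a + csigma θ (n+1) a = a := by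
  simp only [csigma, ← smul_add, pow_succ]
  have : a + (-1:A)^n * θ a + (a + (-1:A)^n * -1 * θ a) = a + a := by ring
  rw [this, half_cancel]

lemma csigma_of_plus {a : A} (h : θ a = a) (n : ℕ) (he : (-1:A)^n = 1) :
    csigma θ n a = a := by
  rw [csigma, h, he, one_mul, half_cancel]

lemma csigma_zero_of_plus {a : A} (h : θ a = a) : csigma θ 0 a = a :=
  csigma_of_plus θ h 0 (pow_zero _)

lemma csigma_one_of_minus {a : A} (h : θ a = -a) : csigma θ 1 a = a := by
  rw [csigma, h, pow_one]
  have : a + -1 * -a = a + a := by ring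
  rw [this, half_cancel]

lemma csigma_succ_eq_sub (n : ℕ) (a : A) : csigma θ (n+1) a = a - csigma θ n a := by
  rw [eq_sub_iff_add_eq, add_comm, csigma_sum_succ]

lemma csigma_sub (m : ℕ) (x : A) :
    x - csigma θ m x = (⅟(2:k)) • (x - (-1:A)^m * θ x) := by
  rw [← csigma_succ_eq_sub, csigma, pow_succ]
  congr 1
  ring

lemma csigma_mul (i j : ℕ) (a b : A) :
    csigma θ (i + j) (a * b)
      = csigma θ i a * csigma θ j b + (a - csigma θ i a) * (b - csigma θ j b) := by
  rw [csigma_sub, csigma_sub]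
  simp only [csigma, map_mul, pow_add]
  rw [smul_mul_assoc, mul_smul_comm, smul_mul_assoc, mul_smul_comm, ← smul_add, ← smul_add]
  congr 1
  have : (a + (-1:A)^i * θ a) * (b + (-1:A)^j * θ b)
        + (a - (-1:A)^i * θ a) * (b - (-1:A)^j * θ b)
      = (a * b + (-1:A)^i * (-1:A)^j * (θ a * θ b))
        + (a * b + (-1:A)^i * (-1:A)^j * (θ a * θ b)) := by ring
  rw [this, half_cancel]


/-- the coefficient spaces of the contraction algebra -/
def Kp (n : ℕ) (a : A) : Prop :=
  (C a * T (-(n:ℤ)) : LaurentPolynomial A) ∈ contraction k A θ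

lemma Kp_zero_of_plus {a : A} (h : θ a = a) : Kp θ 0 a := by
  unfold Kp
  simp only [Nat.cast_zero, neg_zero, T_zero, mul_one]
  exact Algebra.subset_adjoin (Set.mem_insert_iff.mpr (Or.inr (Or.inl ⟨a, h, rfl⟩)))

lemma Kp_one_of_minus {a : A} (h : θ a = -a) : Kp θ 1 a := by
  unfold Kp
  norm_num
  exact Algebra.subset_adjoin (Set.mem_insert_iff.mpr (Or.inr (Or.inr ⟨a, h, rfl⟩)))

lemma Kp_add {n : ℕ} {a b : A} (ha : Kp θ n a) (hb : Kp θ n b) : Kp θ n (a + b) := by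
  unfold Kp at *
  rw [map_add, add_mul]
  exact add_mem ha hb

lemma Kp_zero_elem (n : ℕ) : Kp θ n 0 := by
  unfold Kp
  rw [map_zero, zero_mul]
  exact zero_mem _

lemma Kp_mul {m l : ℕ} {a b : A} (ha : Kp θ m a) (hb : Kp θ l b) : Kp θ (m + l) (a * b) := by
  unfold Kp at *
  have : (C (a*b) * T (-((m+l : ℕ):ℤ)) : LaurentPolynomial A)
      = (C a * T (-(m:ℤ))) * (C b * T (-(l:ℤ))) := by
    rw [map_mul]
    push_cast
    rw [neg_add, T_add]
    ring
  rw [this]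
  exact mul_mem ha hb

lemma Kp_shift {n : ℕ} {a : A} (ha : Kp θ (n + 2) a) : Kp θ n a := by
  unfold Kp at *
  have : (C a * T (-(n:ℤ)) : LaurentPolynomial A)
      = T 2 * (C a * T (-((n+2 : ℕ):ℤ))) := by
    push_cast
    rw [mul_comm (T 2), mul_assoc, ← T_add]
    ring_nf
  rw [this]
  exact mul_mem (t_mem_contraction θ) ha


lemma theta_csigma_zero (hθ2 : ∀ a, θ (θ a) = a) (a : A) :
    θ (csigma θ 0 a) = csigma θ 0 a := by
  rw [csigma, pow_zero, one_mul, map_smul, map_add, hθ2 a, add_comm]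

lemma theta_csigma_one (hθ2 : ∀ a, θ (θ a) = a) (a : A) :
    θ (csigma θ 1 a) = -(csigma θ 1 a) := by
  rw [csigma, pow_one, map_smul, ← smul_neg]
  congr 1
  rw [map_add, map_mul, map_neg, map_one, hθ2 a]
  ring

lemma Kp_smul_mul (hθ2 : ∀ a, θ (θ a) = a) (r z : A) (m : ℕ)
    (h1 : Kp θ m (csigma θ m z)) (h2 : Kp θ (m+1) (csigma θ (m+1) z)) :
    Kp θ m (csigma θ m (r * z)) ∧ Kp θ (m+1) (csigma θ (m+1) (r * z)) := by
  have hplus : θ (csigma θ 0 r) = csigma θ 0 r := theta_csigma_zero θ hθ2 r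
  have hminus : θ (csigma θ 1 r) = -(csigma θ 1 r) := theta_csigma_one θ hθ2 r
  have key : ∀ l : ℕ, csigma θ l (r * z)
      = csigma θ 0 r * csigma θ l z + csigma θ 1 r * csigma θ (l+1) z := by
    intro l
    have := csigma_mul θ 0 l r z
    rw [zero_add] at this
    rw [this, csigma_succ_eq_sub, csigma_succ_eq_sub]
  constructor
  · rw [key m]
    apply Kp_add
    · have := Kp_mul θ (Kp_zero_of_plus θ hplus) h1
      rwa [zero_add] at this
    · apply Kp_shift
      have := Kp_mul θ (Kp_one_of_minus θ hminus) h2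
      have e : 1 + (m + 1) = m + 2 := by ring
      rwa [e] at this
  · rw [key (m+1)]
    apply Kp_add
    · have := Kp_mul θ (Kp_zero_of_plus θ hplus) h2
      rwa [zero_add] at this
    · rw [csigma_add_two]
      have := Kp_mul θ (Kp_one_of_minus θ hminus) h1
      rwa [add_comm 1 m] at this

lemma sigma_mem (hθ2 : ∀ a, θ (θ a) = a) :
    ∀ (n : ℕ) (a : A), a ∈ (Ideal.span {x : A | θ x = -x})^n →
      Kp θ n (csigma θ n a) ∧ Kp θ (n+1) (csigma θ (n+1) a) := by
  intro n
  induction n with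
  | zero =>
    intro a _
    exact ⟨Kp_zero_of_plus θ (theta_csigma_zero θ hθ2 a),
           Kp_one_of_minus θ (theta_csigma_one θ hθ2 a)⟩
  | succ n IH =>
    intro a ha
    rw [pow_succ'] at ha
    refine Submodule.mul_induction_on ha ?_ ?_
    · intro x hx y hy
      refine Submodule.span_induction
        (p := fun x _ => Kp θ (n+1) (csigma θ (n+1) (x*y)) ∧
          Kp θ (n+2) (csigma θ (n+2) (x*y))) ?_ ?_ ?_ ?_ hx
      · intro x hx'
        have hx'' : θ x = -x := hx'
        have h1 : csigma θ (1 + n) (x * y) = x * csigma θ n y := by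
          rw [csigma_mul, csigma_one_of_minus θ hx'', sub_self, zero_mul, add_zero]
        have h2 : csigma θ (1 + (n+1)) (x * y) = x * csigma θ (n+1) y := by
          rw [csigma_mul, csigma_one_of_minus θ hx'', sub_self, zero_mul, add_zero]
        rw [add_comm 1 n] at h1
        have e : 1 + (n+1) = n + 2 := by ring
        rw [e] at h2
        constructor
        · rw [h1]
          have := Kp_mul θ (Kp_one_of_minus θ hx'') (IH y hy).1
          rwa [add_comm 1 n] at this
        · rw [h2]
          have := Kp_mul θ (Kp_one_of_minus θ hx'') (IH y hy).2
          rwa [show 1 + (n+1) = n + 2 by ring] at this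
      · rw [zero_mul]
        exact ⟨by rw [csigma_zero]; exact Kp_zero_elem θ _,
               by rw [csigma_zero]; exact Kp_zero_elem θ _⟩
      · intro x x' _ _ hx1 hx2
        rw [add_mul]
        exact ⟨by rw [csigma_add]; exact Kp_add θ hx1.1 hx2.1,
               by rw [csigma_add]; exact Kp_add θ hx1.2 hx2.2⟩
      · intro r x _ hx1
        rw [smul_eq_mul, mul_assoc]
        exact Kp_smul_mul θ hθ2 r (x*y) (n+1) hx1.1 hx1.2
    · intro x y hx1 hy1
      rw [csigma_add, csigma_add]
      exact ⟨Kp_add θ hx1.1 hy1.1, Kp_add θ hx1.2 hy1.2⟩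


lemma coeff_mem {g : LaurentPolynomial A} (hg : g ∈ contraction k A θ) :
    ∀ m : ℤ, g.coeff m ∈ (Ideal.span {x : A | θ x = -x}) ^ ((-m).toNat) := by
  set I := Ideal.span {x : A | θ x = -x} with hI
  refine Algebra.adjoin_induction
    (p := fun g _ => ∀ m : ℤ, g.coeff m ∈ I ^ ((-m).toNat)) ?_ ?_ ?_ ?_ hg
  · rintro x (rfl | ⟨a, ha, rfl⟩ | ⟨a, ha, rfl⟩) <;> intro m
    · rw [T_apply]
      split_ifs with h
      · subst h
        rw [show ((-2:ℤ)).toNat = 0 by rfl, pow_zero, Ideal.one_eq_top]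
        exact Submodule.mem_top
      · exact zero_mem _
    · rw [C_apply]
      split_ifs with h
      · subst h
        rw [show ((-0:ℤ)).toNat = 0 by rfl, pow_zero, Ideal.one_eq_top]
        exact Submodule.mem_top
      · exact zero_mem _
    · rw [← single_eq_C_mul_T, AddMonoidAlgebra.coeff_single_apply]
      split_ifs with h
      · have : (-m).toNat = 1 := by omega
        rw [this, pow_one]
        exact Ideal.subset_span ha
      · exact zero_mem _
  · intro r m
    rw [LaurentPolynomial.algebraMap_apply, C_apply]
    split_ifs with h
    · subst h
      rw [show ((-0:ℤ)).toNat = 0 by rfl, pow_zero, Ideal.one_eq_top]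
      exact Submodule.mem_top
    · exact zero_mem _
  · intro x y _ _ hx hy m
    rw [AddMonoidAlgebra.coeff_add, Finsupp.add_apply]
    exact add_mem (hx m) (hy m)
  · intro x y _ _ hx hy m
    classical
    rw [AddMonoidAlgebra.mul_apply]
    refine Ideal.sum_mem _ fun i _ => Ideal.sum_mem _ fun j _ => ?_
    dsimp only
    split_ifs with h
    · have hle : (-m).toNat ≤ (-i).toNat + (-j).toNat := by omega
      refine Ideal.pow_le_pow_right hle ?_
      rw [pow_add]
      exact Ideal.mul_mem_mul (hx i) (hy j)
    · exact zero_mem _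

lemma Kp_sub_I {n : ℕ} {a : A} (ha : Kp θ n a) :
    a ∈ (Ideal.span {x : A | θ x = -x}) ^ n := by
  have := coeff_mem θ ha (-(n:ℤ))
  rw [← single_eq_C_mul_T, AddMonoidAlgebra.coeff_single_apply, if_pos rfl] at this
  simpa using this


/-- the "symbol" map from polynomials to Laurent polynomials. -/
noncomputable def tau (f : Polynomial A) : LaurentPolynomial A :=
  f.sum fun n a => C (csigma θ n a) * T (-(n:ℤ))

lemma tau_zero : tau θ (0 : Polynomial A) = 0 := Polynomial.sum_zero_index _

lemma tau_term_zero (n : ℕ) : C (csigma θ n (0:A)) * T (-(n:ℤ)) = 0 := by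
  rw [csigma_zero, map_zero, zero_mul]

lemma tau_add (f g : Polynomial A) : tau θ (f + g) = tau θ f + tau θ g := by
  unfold tau
  rw [Polynomial.sum_add_index]
  · intro i
    exact tau_term_zero θ i
  · intro i b₁ b₂
    rw [csigma_add, map_add, add_mul]

lemma tau_monomial (n : ℕ) (a : A) :
    tau θ (Polynomial.monomial n a) = C (csigma θ n a) * T (-(n:ℤ)) :=
  Polynomial.sum_monomial_index a _ (tau_term_zero θ n)

lemma tau_mem {f : Polynomial A} (hθ2 : ∀ a, θ (θ a) = a)
    (hf : f ∈ reesAlgebra (Ideal.span {x : A | θ x = -x})) :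
    tau θ f ∈ contraction k A θ := by
  apply Subalgebra.sum_mem
  intro n _
  exact (sigma_mem θ hθ2 n (f.coeff n) (hf n)).1

lemma tau_coeff (f : Polynomial A) (n : ℕ) :
    (tau θ f).coeff (-(n:ℤ)) = csigma θ n (f.coeff n) := by
  classical
  unfold tau Polynomial.sum
  simp only [← single_eq_C_mul_T]
  rw [AddMonoidAlgebra.coeff_sum, Finset.sum_apply']
  rw [Finset.sum_eq_single n]
  · rw [AddMonoidAlgebra.coeff_single_apply, if_pos rfl]
  · intro m _ hm
    rw [AddMonoidAlgebra.coeff_single_apply, if_neg]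
    omega
  · intro hn
    rw [Polynomial.notMem_support_iff.mp hn, csigma_zero, AddMonoidAlgebra.coeff_single_apply]
    simp


variable (k) in
/-- the underlying function of the comparison map. -/
noncomputable def psi0 (hθ2 : ∀ a, θ (θ a) = a)
    (f : ↥(reesAlgebra (Ideal.span {x : A | θ x = -x}))) :
    (↥(contraction k A θ) ⧸
        Ideal.span {(⟨T 2, t_mem_contraction θ⟩ : ↥(contraction k A θ))}) :=
  Ideal.Quotient.mk _ ⟨tau θ f.1, tau_mem θ hθ2 f.2⟩

variable (hθ2 : ∀ a, θ (θ a) = a)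

lemma psi0_add (f g : ↥(reesAlgebra (Ideal.span {x : A | θ x = -x}))) :
    psi0 k θ hθ2 (f + g) = psi0 k θ hθ2 f + psi0 k θ hθ2 g := by
  unfold psi0
  rw [← RingHom.map_add]
  congr 1
  exact Subtype.ext (tau_add θ f.1 g.1)

lemma psi0_zero : psi0 k θ hθ2 0 = 0 := by
  unfold psi0
  have : (⟨tau θ (0 : ↥(reesAlgebra (Ideal.span {x : A | θ x = -x}))).1,
      tau_mem θ hθ2 (0 : ↥(reesAlgebra (Ideal.span {x : A | θ x = -x}))).2⟩ :
      ↥(contraction k A θ)) = 0 := Subtype.ext (tau_zero θ)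
  rw [this, RingHom.map_zero]

lemma psi0_monomial (n : ℕ) (a : A)
    (ha : a ∈ (Ideal.span {x : A | θ x = -x}) ^ n) :
    psi0 k θ hθ2 ⟨Polynomial.monomial n a, reesAlgebra.monomial_mem.mpr ha⟩
      = Ideal.Quotient.mk _
          ⟨C (csigma θ n a) * T (-(n:ℤ)), (sigma_mem θ hθ2 n a ha).1⟩ := by
  unfold psi0
  congr 1
  exact Subtype.ext (tau_monomial θ n a)

lemma T_shuffle (x y : A) (i j : ℕ) :
    (C x * T (-(i:ℤ))) * (C y * T (-(j:ℤ)))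
      = C (x * y) * T (-((i+j:ℕ):ℤ)) := by
  rw [show (-((i+j:ℕ):ℤ)) = -(i:ℤ) + -(j:ℤ) by push_cast; ring, T_add, map_mul]
  ring

lemma psi0_mono_mul (i j : ℕ) (a b : A)
    (ha : a ∈ (Ideal.span {x : A | θ x = -x}) ^ i)
    (hb : b ∈ (Ideal.span {x : A | θ x = -x}) ^ j) :
    psi0 k θ hθ2 (⟨Polynomial.monomial i a, reesAlgebra.monomial_mem.mpr ha⟩
        * ⟨Polynomial.monomial j b, reesAlgebra.monomial_mem.mpr hb⟩)
      = psi0 k θ hθ2 ⟨Polynomial.monomial i a, reesAlgebra.monomial_mem.mpr ha⟩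
        * psi0 k θ hθ2 ⟨Polynomial.monomial j b, reesAlgebra.monomial_mem.mpr hb⟩ := by
  have hab : (a*b) ∈ (Ideal.span {x : A | θ x = -x}) ^ (i+j) := by
    rw [pow_add]
    exact Ideal.mul_mem_mul ha hb
  have hprod : (⟨Polynomial.monomial i a, reesAlgebra.monomial_mem.mpr ha⟩
        * ⟨Polynomial.monomial j b, reesAlgebra.monomial_mem.mpr hb⟩ :
        ↥(reesAlgebra (Ideal.span {x : A | θ x = -x})))
      = ⟨Polynomial.monomial (i+j) (a*b), reesAlgebra.monomial_mem.mpr hab⟩ :=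
    Subtype.ext (Polynomial.monomial_mul_monomial i j a b)
  rw [hprod, psi0_monomial θ hθ2 (i+j) (a*b) hab, psi0_monomial θ hθ2 i a ha,
    psi0_monomial θ hθ2 j b hb, ← RingHom.map_mul]
  rw [Ideal.Quotient.eq]
  set d : A := csigma θ (i+1) a * csigma θ (j+1) b with hd
  have hdK : Kp θ (i + j + 2) d := by
    have := Kp_mul θ (sigma_mem θ hθ2 i a ha).2 (sigma_mem θ hθ2 j b hb).2
    rwa [show i + 1 + (j+1) = i + j + 2 by ring] at this
  rw [Ideal.mem_span_singleton']
  refine ⟨⟨C d * T (-((i+j+2 : ℕ):ℤ)), hdK⟩, ?_⟩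
  apply Subtype.ext
  have hcoe : ((⟨C d * T (-((i+j+2 : ℕ):ℤ)), hdK⟩ *
      (⟨T 2, t_mem_contraction θ⟩ : ↥(contraction k A θ)) :
      ↥(contraction k A θ)) : LaurentPolynomial A)
      = C d * T (-((i+j+2 : ℕ):ℤ)) * T 2 := rfl
  rw [hcoe, mul_T_assoc]
  have hsub : ((⟨C (csigma θ (i+j) (a*b)) * T (-((i+j:ℕ):ℤ)),
        (sigma_mem θ hθ2 (i+j) (a*b) hab).1⟩ -
      ⟨C (csigma θ i a) * T (-(i:ℤ)), (sigma_mem θ hθ2 i a ha).1⟩ *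
      ⟨C (csigma θ j b) * T (-(j:ℤ)), (sigma_mem θ hθ2 j b hb).1⟩ :
      ↥(contraction k A θ)) : LaurentPolynomial A)
      = C (csigma θ (i+j) (a*b)) * T (-((i+j:ℕ):ℤ))
        - (C (csigma θ i a) * T (-(i:ℤ))) * (C (csigma θ j b) * T (-(j:ℤ))) := rfl
  rw [hsub, T_shuffle]
  have hmul : csigma θ (i+j) (a*b) = csigma θ i a * csigma θ j b + d := by
    rw [csigma_mul, hd, csigma_succ_eq_sub, csigma_succ_eq_sub]
  rw [hmul, map_add, add_mul]
  have he2 : -((i+j+2 : ℕ):ℤ) + 2 = -((i+j : ℕ):ℤ) := by push_cast; ring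
  rw [he2]
  ring


lemma rees_mono_sum (p : ↥(reesAlgebra (Ideal.span {x : A | θ x = -x}))) :
    p = ∑ n ∈ (p : Polynomial A).support,
      (⟨Polynomial.monomial n ((p : Polynomial A).coeff n),
        reesAlgebra.monomial_mem.mpr (p.2 n)⟩ :
        ↥(reesAlgebra (Ideal.span {x : A | θ x = -x}))) := by
  apply Subtype.ext
  rw [AddSubmonoidClass.coe_finset_sum]
  exact Polynomial.as_sum_support (p : Polynomial A)

lemma psi0_mul (x y : ↥(reesAlgebra (Ideal.span {x : A | θ x = -x}))) :
    psi0 k θ hθ2 (x * y) = psi0 k θ hθ2 x * psi0 k θ hθ2 y := by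
  classical
  let ψ : ↥(reesAlgebra (Ideal.span {x : A | θ x = -x})) →+
      (↥(contraction k A θ) ⧸
        Ideal.span {(⟨T 2, t_mem_contraction θ⟩ : ↥(contraction k A θ))}) :=
    AddMonoidHom.mk' (psi0 k θ hθ2) (psi0_add θ hθ2)
  show ψ (x * y) = ψ x * ψ y
  conv_lhs => rw [rees_mono_sum θ x, rees_mono_sum θ y]
  conv_rhs => rw [rees_mono_sum θ x, rees_mono_sum θ y]
  rw [Finset.sum_mul_sum, map_sum, map_sum, map_sum]
  rw [Finset.sum_mul_sum]
  apply Finset.sum_congr rfl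
  intro i _
  rw [map_sum]
  apply Finset.sum_congr rfl
  intro j _
  exact psi0_mono_mul θ hθ2 i j _ _ (x.2 i) (y.2 j)

lemma psi0_one : psi0 k θ hθ2 1 = 1 := by
  unfold psi0
  have h1 : tau θ ((1 : ↥(reesAlgebra (Ideal.span {x : A | θ x = -x}))) :
      Polynomial A) = 1 := by
    have : ((1 : ↥(reesAlgebra (Ideal.span {x : A | θ x = -x}))) :
        Polynomial A) = Polynomial.monomial 0 (1:A) := by
      rw [Polynomial.monomial_zero_left, map_one]
      rfl
    rw [this, tau_monomial, csigma_zero_of_plus θ (map_one θ)]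
    simp
  have : (⟨tau θ ((1 : ↥(reesAlgebra (Ideal.span {x : A | θ x = -x}))) :
      Polynomial A), tau_mem θ hθ2 (1 :
      ↥(reesAlgebra (Ideal.span {x : A | θ x = -x}))).2⟩ :
      ↥(contraction k A θ)) = 1 := Subtype.ext (by exact h1)
  rw [this, RingHom.map_one]

lemma psi0_commutes (r : k) :
    psi0 k θ hθ2 (algebraMap k ↥(reesAlgebra (Ideal.span {x : A | θ x = -x})) r)
      = algebraMap k _ r := by
  unfold psi0
  have hco : ((algebraMap k ↥(reesAlgebra (Ideal.span {x : A | θ x = -x})) r :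
      ↥(reesAlgebra (Ideal.span {x : A | θ x = -x}))) : Polynomial A)
      = Polynomial.monomial 0 (algebraMap k A r) := by
    rw [Polynomial.monomial_zero_left]
    rfl
  have h1 : tau θ ((algebraMap k ↥(reesAlgebra (Ideal.span {x : A | θ x = -x})) r :
      ↥(reesAlgebra (Ideal.span {x : A | θ x = -x}))) : Polynomial A)
      = C (algebraMap k A r) := by
    rw [hco, tau_monomial, csigma_zero_of_plus θ (θ.commutes r)]
    simp
  have : (⟨tau θ _, tau_mem θ hθ2 (algebraMap k
      ↥(reesAlgebra (Ideal.span {x : A | θ x = -x})) r).2⟩ :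
      ↥(contraction k A θ)) = algebraMap k ↥(contraction k A θ) r := by
    apply Subtype.ext
    show tau θ _ = algebraMap k (LaurentPolynomial A) r
    rw [LaurentPolynomial.algebraMap_apply]
    exact h1
  rw [this]
  rfl

variable (k) in
/-- the comparison map as an algebra morphism. -/
noncomputable def Psi : ↥(reesAlgebra (Ideal.span {x : A | θ x = -x})) →ₐ[k]
    (↥(contraction k A θ) ⧸
      Ideal.span {(⟨T 2, t_mem_contraction θ⟩ : ↥(contraction k A θ))}) where
  toFun := psi0 k θ hθ2
  map_one' := psi0_one θ hθ2
  map_mul' := psi0_mul θ hθ2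
  map_zero' := psi0_zero θ hθ2
  map_add' := psi0_add θ hθ2
  commutes' := psi0_commutes θ hθ2


lemma Psi_vanish (x : ↥(reesAlgebra (Ideal.span {x : A | θ x = -x})))
    (hx : x ∈ Ideal.span {x : ↥(reesAlgebra (Ideal.span {x : A | θ x = -x})) |
      ∃ a ∈ Ideal.span {x : A | θ x = -x}, (x : Polynomial A) = Polynomial.C a}) :
    Psi k θ hθ2 x = 0 := by
  revert x
  have hker : Ideal.span {x : ↥(reesAlgebra (Ideal.span {x : A | θ x = -x})) |
      ∃ a ∈ Ideal.span {x : A | θ x = -x}, (x : Polynomial A) = Polynomial.C a}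
      ≤ RingHom.ker (Psi k θ hθ2).toRingHom := by
    rw [Ideal.span_le]
    rintro x ⟨a, haI, hxa⟩
    rw [SetLike.mem_coe, RingHom.mem_ker]
    have hmem0 : a ∈ (Ideal.span {x : A | θ x = -x}) ^ 0 := by
      rw [pow_zero, Ideal.one_eq_top]
      exact Submodule.mem_top
    have hxeq : x = ⟨Polynomial.monomial 0 a, reesAlgebra.monomial_mem.mpr hmem0⟩ := by
      apply Subtype.ext
      rw [hxa]
      exact (Polynomial.monomial_zero_left (a := a)).symm
    have hPsix : (Psi k θ hθ2).toRingHom x = psi0 k θ hθ2 x := rfl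
    rw [hPsix, hxeq, psi0_monomial θ hθ2 0 a hmem0, Ideal.Quotient.eq_zero_iff_mem]
    have hK2 : Kp θ 2 (csigma θ 0 a) := by
      have := (sigma_mem θ hθ2 1 a (by rwa [pow_one])).2
      rwa [show (1:ℕ)+1 = 0+2 by ring, csigma_add_two] at this
    rw [Ideal.mem_span_singleton']
    refine ⟨⟨C (csigma θ 0 a) * T (-((2:ℕ):ℤ)), hK2⟩, ?_⟩
    apply Subtype.ext
    show C (csigma θ 0 a) * T (-((2:ℕ):ℤ)) * T 2 = C (csigma θ 0 a) * T (-((0:ℕ):ℤ))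
    rw [mul_T_assoc]
    norm_num
  intro x hx
  exact hker hx

lemma Psi_ker (f : ↥(reesAlgebra (Ideal.span {x : A | θ x = -x})))
    (hf : Psi k θ hθ2 f = 0) :
    f ∈ Ideal.span {x : ↥(reesAlgebra (Ideal.span {x : A | θ x = -x})) |
      ∃ a ∈ Ideal.span {x : A | θ x = -x}, (x : Polynomial A) = Polynomial.C a} := by
  classical
  -- extract the coefficient information from `hf`
  have hf' : Ideal.Quotient.mk
      (Ideal.span {(⟨T 2, t_mem_contraction θ⟩ : ↥(contraction k A θ))})
      ⟨tau θ f.1, tau_mem θ hθ2 f.2⟩ = 0 := hf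
  have hmem : (⟨tau θ f.1, tau_mem θ hθ2 f.2⟩ : ↥(contraction k A θ)) ∈
      Ideal.span {(⟨T 2, t_mem_contraction θ⟩ : ↥(contraction k A θ))} :=
    Ideal.Quotient.eq_zero_iff_mem.mp hf' 
  rw [Ideal.mem_span_singleton'] at hmem
  obtain ⟨c, hc⟩ := hmem
  have hc' : (c : LaurentPolynomial A) * T 2 = tau θ f.1 := congrArg Subtype.val hc
  have hcoeff : ∀ n : ℕ, (f : Polynomial A).coeff n ∈ (Ideal.span {x : A | θ x = -x}) ^ (n+1) := by
    intro n
    have h1 : csigma θ n ((f : Polynomial A).coeff n)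
        = (c : LaurentPolynomial A).coeff (-(n:ℤ) - 2) := by
      rw [← tau_coeff θ f.1 n, ← hc']
      have h5 := AddMonoidAlgebra.coeff_mul_single_apply (c : LaurentPolynomial A) (1:A)
        (2:ℤ) (-(n:ℤ))
      rw [mul_one] at h5
      exact h5
    have h2 : csigma θ n ((f : Polynomial A).coeff n) ∈ (Ideal.span {x : A | θ x = -x}) ^ (n+2) := by
      rw [h1]
      have := coeff_mem θ c.2 (-(n:ℤ) - 2)
      rwa [show (-(-(n:ℤ) - 2)).toNat = n + 2 by omega] at this
    have h3 : csigma θ (n+1) ((f : Polynomial A).coeff n) ∈ (Ideal.span {x : A | θ x = -x}) ^ (n+1) :=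
      Kp_sub_I θ (sigma_mem θ hθ2 n _ (f.2 n)).2
    have h4 := csigma_sum_succ θ n ((f : Polynomial A).coeff n)
    rw [← h4]
    exact add_mem (Ideal.pow_le_pow_right (by omega) h2) h3
  -- now deduce membership in the ideal generated by degree-zero elements of `I`
  rw [rees_mono_sum θ f]
  apply Ideal.sum_mem
  intro n _
  have hfn := hcoeff n
  rw [pow_succ'] at hfn
  have key : ∃ hr : Polynomial.monomial n ((f : Polynomial A).coeff n) ∈
      reesAlgebra (Ideal.span {x : A | θ x = -x}), (⟨Polynomial.monomial n ((f : Polynomial A).coeff n), hr⟩ :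
        ↥(reesAlgebra (Ideal.span {x : A | θ x = -x}))) ∈ Ideal.span {x : ↥(reesAlgebra (Ideal.span {x : A | θ x = -x})) |
          ∃ a ∈ Ideal.span {x : A | θ x = -x}, (x : Polynomial A) = Polynomial.C a} := by
    refine Submodule.mul_induction_on (C := fun r => ∃ hr : Polynomial.monomial n r ∈
      reesAlgebra (Ideal.span {x : A | θ x = -x}), (⟨Polynomial.monomial n r, hr⟩ : ↥(reesAlgebra (Ideal.span {x : A | θ x = -x}))) ∈
        Ideal.span {x : ↥(reesAlgebra (Ideal.span {x : A | θ x = -x})) |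
          ∃ a ∈ Ideal.span {x : A | θ x = -x}, (x : Polynomial A) = Polynomial.C a}) hfn ?_ ?_
    · intro x hx y hy
      have hymem : Polynomial.monomial n y ∈ reesAlgebra (Ideal.span {x : A | θ x = -x}) :=
        reesAlgebra.monomial_mem.mpr hy
      have hxymem : Polynomial.monomial n (x * y) ∈ reesAlgebra (Ideal.span {x : A | θ x = -x}) :=
        reesAlgebra.monomial_mem.mpr (Ideal.mul_mem_left _ x hy)
      have hCx : Polynomial.C x ∈ reesAlgebra (Ideal.span {x : A | θ x = -x}) := by
        rw [← Polynomial.monomial_zero_left]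
        refine reesAlgebra.monomial_mem.mpr ?_
        rw [pow_zero, Ideal.one_eq_top]
        exact Submodule.mem_top
      refine ⟨hxymem, ?_⟩
      have : (⟨Polynomial.monomial n (x*y), hxymem⟩ : ↥(reesAlgebra (Ideal.span {x : A | θ x = -x})))
          = ⟨Polynomial.C x, hCx⟩ * ⟨Polynomial.monomial n y, hymem⟩ :=
        Subtype.ext (Polynomial.C_mul_monomial).symm
      rw [this]
      exact Ideal.mul_mem_right _ _ (Ideal.subset_span ⟨x, hx, rfl⟩)
    · rintro x y ⟨hx, hxJ⟩ ⟨hy, hyJ⟩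
      have hxy : Polynomial.monomial n (x + y) ∈ reesAlgebra (Ideal.span {x : A | θ x = -x}) := by
        rw [map_add]
        exact add_mem hx hy
      refine ⟨hxy, ?_⟩
      have : (⟨Polynomial.monomial n (x+y), hxy⟩ : ↥(reesAlgebra (Ideal.span {x : A | θ x = -x})))
          = ⟨Polynomial.monomial n x, hx⟩ + ⟨Polynomial.monomial n y, hy⟩ :=
        Subtype.ext (map_add (Polynomial.monomial n) x y)
      rw [this]
      exact add_mem hxJ hyJ
  obtain ⟨hr, hJ⟩ := key
  exact hJ

end Aux

theorem contraction_fiber_zero_iso_assocGraded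
    (k A : Type*) [CommRing k] [CommRing A] [Algebra k A] [Invertible (2 : k)]
    (θ : A →ₐ[k] A) (hθ : θ.comp θ = AlgHom.id k A) :
    Nonempty
      ((↥(contraction k A θ) ⧸
          Ideal.span {(⟨T 2, t_mem_contraction θ⟩ : ↥(contraction k A θ))})
        ≃ₐ[k]
       (↥(reesAlgebra (Ideal.span {x : A | θ x = -x})) ⧸
          Ideal.span {x : ↥(reesAlgebra (Ideal.span {x : A | θ x = -x})) |
            ∃ a ∈ Ideal.span {x : A | θ x = -x},
              (x : Polynomial A) = Polynomial.C a})) := by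
  have hθ2 : ∀ a, θ (θ a) = a := fun a => DFunLike.congr_fun hθ a
  set J : Ideal ↥(reesAlgebra (Ideal.span {x : A | θ x = -x})) :=
    Ideal.span {x : ↥(reesAlgebra (Ideal.span {x : A | θ x = -x})) |
      ∃ a ∈ Ideal.span {x : A | θ x = -x}, (x : Polynomial A) = Polynomial.C a} with hJ
  let PsiBar := Ideal.Quotient.liftₐ J (Psi k θ hθ2) (fun x hx => Psi_vanish θ hθ2 x hx)
  have hPB : ∀ f, PsiBar (Ideal.Quotient.mk J f) = Psi k θ hθ2 f := fun f => by
    rw [Ideal.Quotient.liftₐ_apply]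
    rfl
  have hinj : Function.Injective PsiBar := by
    intro x y hxy
    obtain ⟨f, rfl⟩ := Ideal.Quotient.mk_surjective x
    obtain ⟨g, rfl⟩ := Ideal.Quotient.mk_surjective y
    rw [hPB, hPB] at hxy
    rw [Ideal.Quotient.eq]
    apply Psi_ker θ hθ2
    rw [map_sub, hxy, sub_self]
  have hsurj : Function.Surjective PsiBar := by
    intro q
    obtain ⟨g, rfl⟩ := Ideal.Quotient.mk_surjective q
    obtain ⟨gv, hgv⟩ := g
    refine Algebra.adjoin_induction
      (p := fun gv hgv => ∃ x, PsiBar x = Ideal.Quotient.mk _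
        ((⟨gv, hgv⟩ : ↥(contraction k A θ)))) ?_ ?_ ?_ ?_ hgv
    · rintro x (rfl | ⟨a, ha, rfl⟩ | ⟨a, ha, rfl⟩)
      · refine ⟨0, ?_⟩
        rw [map_zero]
        symm
        rw [Ideal.Quotient.eq_zero_iff_mem]
        exact Ideal.mem_span_singleton_self _
      · have hmem0 : a ∈ (Ideal.span {x : A | θ x = -x}) ^ 0 := by
          rw [pow_zero, Ideal.one_eq_top]; exact Submodule.mem_top
        refine ⟨Ideal.Quotient.mk J
          ⟨Polynomial.monomial 0 a, reesAlgebra.monomial_mem.mpr hmem0⟩, ?_⟩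
        rw [hPB]
        have : Psi k θ hθ2 ⟨Polynomial.monomial 0 a, reesAlgebra.monomial_mem.mpr hmem0⟩
            = psi0 k θ hθ2 ⟨Polynomial.monomial 0 a, reesAlgebra.monomial_mem.mpr hmem0⟩ := rfl
        rw [this, psi0_monomial θ hθ2 0 a hmem0]
        congr 1
        apply Subtype.ext
        show C (csigma θ 0 a) * T (-((0:ℕ):ℤ)) = C a
        rw [csigma_zero_of_plus θ ha]
        norm_num
      · have hmem1 : a ∈ (Ideal.span {x : A | θ x = -x}) ^ 1 := by
          rw [pow_one]; exact Ideal.subset_span ha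
        refine ⟨Ideal.Quotient.mk J
          ⟨Polynomial.monomial 1 a, reesAlgebra.monomial_mem.mpr hmem1⟩, ?_⟩
        rw [hPB]
        have : Psi k θ hθ2 ⟨Polynomial.monomial 1 a, reesAlgebra.monomial_mem.mpr hmem1⟩
            = psi0 k θ hθ2 ⟨Polynomial.monomial 1 a, reesAlgebra.monomial_mem.mpr hmem1⟩ := rfl
        rw [this, psi0_monomial θ hθ2 1 a hmem1]
        congr 1
        apply Subtype.ext
        show C (csigma θ 1 a) * T (-((1:ℕ):ℤ)) = C a * T (-1)
        rw [csigma_one_of_minus θ ha]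
        norm_num
    · intro r
      refine ⟨algebraMap k _ r, ?_⟩
      rw [AlgHom.commutes]
      rfl
    · rintro x y hx hy ⟨u, hu⟩ ⟨v, hv⟩
      refine ⟨u + v, ?_⟩
      rw [map_add, hu, hv, ← RingHom.map_add]
      rfl
    · rintro x y hx hy ⟨u, hu⟩ ⟨v, hv⟩
      refine ⟨u * v, ?_⟩
      rw [map_mul, hu, hv, ← RingHom.map_mul]
      rfl
  exact ⟨(AlgEquiv.ofBijective PsiBar ⟨hinj, hsurj⟩).symm⟩
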